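/- Chemin's moment interpolation inequality (Lemma 3.8): Let n ≥ 1 and γ > 1. For every measurable f : ℝⁿ → ℝ with f ∈ L¹(ℝⁿ, dx) ∩ L^γ(ℝⁿ, dx) and ∫|x|²|f(x)| dx < ∞, one has ‖f‖_{L¹(ℝⁿ)} ≤ C₈ ‖f‖_{L^γ(ℝⁿ)}^{2γ/((n+2)γ−n)} (∫_{ℝⁿ}|x|²|f(x)| dx)^{n(γ−1)/((n+2)γ−n)}, where C₈ = 2(π^{n/2}/Γ(n/2 + 1))^{2(γ−1)/((n+2)γ−n)}. -/

import Mathlib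

open MeasureTheory Real

noncomputable section

/-- The space `ℝⁿ`. -/
abbrev Spc (n : ℕ) := EuclideanSpace ℝ (Fin n)

/-- `ωₙ = π^{n/2}/Γ(n/2+1)`, the Lebesgue measure of the unit ball in `ℝⁿ`. -/
def unitBallVol (n : ℕ) : ℝ := Real.pi ^ ((n : ℝ) / 2) / Real.Gamma ((n : ℝ) / 2 + 1)

/-- Optimization lemma: if `I ≤ a R^α + b/R²` for all `R > 0`, then
`I ≤ 2 a^{2/(α+2)} b^{α/(α+2)}`. -/
lemma chemin_opt_lemma {I a b α : ℝ} (ha : 0 ≤ a) (hb : 0 ≤ b) (hα : 0 < α)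
    (h : ∀ R : ℝ, 0 < R → I ≤ a * R ^ α + b / R ^ 2) :
    I ≤ 2 * a ^ (2 / (α + 2)) * b ^ (α / (α + 2)) := by
  have hα2 : (0:ℝ) < α + 2 := by linarith
  have hs : 0 < 2 / (α + 2) := by positivity
  have ht : 0 < α / (α + 2) := by positivity
  rcases eq_or_lt_of_le ha with rfl | ha
  · -- a = 0 : RHS is 0; show I ≤ 0
    have hI0 : I ≤ 0 := by
      refine le_of_forall_gt_imp_ge_of_dense fun ε hε => ?_
      rcases eq_or_lt_of_le hb with rfl | hb
      · have := h 1 one_pos; simp at this; linarith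
      · have hbe : (0:ℝ) < b / ε := by positivity
        have hR : (0:ℝ) < Real.sqrt (b / ε) := Real.sqrt_pos.mpr hbe
        have h2 := h _ hR
        rw [Real.sq_sqrt hbe.le] at h2
        have hbee : b / (b / ε) = ε := by field_simp
        rw [hbee] at h2
        simpa using h2
    rw [Real.zero_rpow hs.ne', mul_zero, zero_mul]
    exact hI0
  rcases eq_or_lt_of_le hb with rfl | hb
  · -- b = 0 : RHS is 0; show I ≤ 0
    have hI0 : I ≤ 0 := by
      refine le_of_forall_gt_imp_ge_of_dense fun ε hε => ?_
      have hea : (0:ℝ) < ε / a := by positivity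
      have hR : (0:ℝ) < (ε / a) ^ (α⁻¹) := Real.rpow_pos_of_pos hea _
      have h2 := h _ hR
      rw [← Real.rpow_mul hea.le, inv_mul_cancel₀ hα.ne', Real.rpow_one] at h2
      have : a * (ε / a) = ε := by field_simp
      rw [this] at h2
      simpa using h2
    rw [Real.zero_rpow ht.ne', mul_zero]
    exact hI0
  · -- main case
    set s := 2 / (α + 2) with hs_def
    set t := α / (α + 2) with ht_def
    have hts : s = 1 - t := by rw [hs_def, ht_def]; field_simp; ring
    have hst : t = 1 - s := by rw [hs_def, ht_def]; field_simp; ring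
    have hba : (0:ℝ) < b / a := by positivity
    set R := (b / a) ^ ((α + 2)⁻¹) with hR_def
    have hR : 0 < R := Real.rpow_pos_of_pos hba _
    have h1 : R ^ α = (b / a) ^ t := by
      rw [hR_def, ← Real.rpow_mul hba.le, inv_mul_eq_div]
    have h2 : R ^ 2 = (b / a) ^ s := by
      rw [hR_def, ← Real.rpow_natCast ((b / a) ^ ((α+2):ℝ)⁻¹) 2,
        ← Real.rpow_mul hba.le]
      norm_num [inv_mul_eq_div]
      rw [hs_def]
    have key1 : a * (b / a) ^ t = a ^ s * b ^ t := by
      rw [Real.div_rpow hb.le ha.le]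
      rw [hts, Real.rpow_sub ha, Real.rpow_one]
      field_simp
    have key2 : b / (b / a) ^ s = a ^ s * b ^ t := by
      rw [Real.div_rpow hb.le ha.le, div_div_eq_mul_div]
      rw [hst, Real.rpow_sub hb, Real.rpow_one]
      have has : (0:ℝ) < a ^ s := Real.rpow_pos_of_pos ha _
      have hbs : (0:ℝ) < b ^ s := Real.rpow_pos_of_pos hb _
      field_simp
    have := h R hR
    rw [h1, h2, key1, key2] at this
    linarith

theorem MeasureTheory.MemLp.abs_real {X : Type*} [MeasurableSpace X] {μ : Measure X} {p : ENNReal}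
    {f : X → ℝ} (hf : MemLp f p μ) : MemLp (fun x => |f x|) p μ := by
  simpa [Real.norm_eq_abs] using hf.norm

/-- **Chemin's moment interpolation inequality (Lemma 3.8).**
For `n ≥ 1`, `γ > 1` and `f ∈ L¹(ℝⁿ) ∩ L^γ(ℝⁿ)` with finite second moment,
`‖f‖_{L¹} ≤ C₈ ‖f‖_{L^γ}^{2γ/((n+2)γ-n)} (∫ |x|²|f(x)| dx)^{n(γ-1)/((n+2)γ-n)}`,
where `C₈ = 2 (π^{n/2}/Γ(n/2+1))^{2(γ-1)/((n+2)γ-n)}`. -/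
theorem chemin_moment_interpolation
    (n : ℕ) (hn : 1 ≤ n) (γ : ℝ) (hγ : 1 < γ)
    (f : Spc n → ℝ) (hf_meas : Measurable f)
    (hf1 : Integrable f) (hfγ : MemLp f (ENNReal.ofReal γ))
    (hf2 : Integrable (fun x => ‖x‖ ^ 2 * |f x|)) :
    (∫ x, |f x|)
      ≤ 2 * unitBallVol n ^ (2 * (γ - 1) / (((n : ℝ) + 2) * γ - (n : ℝ))) *
          ((∫ x, |f x| ^ γ) ^ (1 / γ)) ^ (2 * γ / (((n : ℝ) + 2) * γ - (n : ℝ))) *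
          (∫ x, ‖x‖ ^ 2 * |f x|) ^ ((n : ℝ) * (γ - 1) / (((n : ℝ) + 2) * γ - (n : ℝ))) := by
  haveI : Nonempty (Fin n) := ⟨⟨0, hn⟩⟩
  have hγ0 : (0:ℝ) < γ := lt_trans one_pos hγ
  have hγ1 : (0:ℝ) < γ - 1 := by linarith
  set N : ℝ := (∫ x, |f x| ^ γ) ^ (1 / γ) with hN_def
  set M : ℝ := ∫ x : Spc n, ‖x‖ ^ 2 * |f x| with hM_def
  set ω : ℝ := unitBallVol n with hω_def
  have hω : 0 < ω := by
    rw [hω_def, unitBallVol]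
    exact div_pos (Real.rpow_pos_of_pos Real.pi_pos _)
      (Real.Gamma_pos_of_pos (by positivity))
  have hN : 0 ≤ N := by
    apply Real.rpow_nonneg
    exact integral_nonneg fun x => Real.rpow_nonneg (abs_nonneg _) _
  have hM : 0 ≤ M :=
    integral_nonneg fun x => mul_nonneg (by positivity) (abs_nonneg _)
  set α : ℝ := (n : ℝ) * (γ - 1) / γ with hα_def
  have hα : 0 < α := by
    apply div_pos _ hγ0
    have : (1:ℝ) ≤ (n:ℝ) := by exact_mod_cast hn
    nlinarith
  -- key splitting estimate
  have key : ∀ R : ℝ, 0 < R →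
      (∫ x, |f x|) ≤ (ω ^ ((γ - 1)/γ) * N) * R ^ α + M / R ^ 2 := by
    intro R hR
    set B : Set (Spc n) := Metric.closedBall 0 R with hB_def
    have hmB : MeasurableSet B := measurableSet_closedBall
    have habs : Integrable (fun x : Spc n => |f x|) := hf1.abs
    have hsplit : (∫ x, |f x|) = (∫ x in B, |f x|) + ∫ x in Bᶜ, |f x| :=
      (integral_add_compl hmB habs).symm
    -- inner estimate via Hölder
    have hvol : (volume B).toReal = R ^ (n : ℕ) * ω := by
      have hcard : Fintype.card (Fin n) = n := Fintype.card_fin n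
      have hsq : Real.sqrt Real.pi ^ n = Real.pi ^ ((n : ℝ) / 2) := by
        rw [Real.sqrt_eq_rpow, ← Real.rpow_natCast (Real.pi ^ ((1:ℝ)/2)) n,
          ← Real.rpow_mul Real.pi_pos.le]
        congr 1
        ring
      rw [hB_def, EuclideanSpace.volume_closedBall, hcard]
      rw [ENNReal.toReal_mul, ENNReal.toReal_pow, ENNReal.toReal_ofReal hR.le,
        ENNReal.toReal_ofReal (by positivity)]
      rw [hsq, hω_def, unitBallVol]
    have hq : γ.HolderConjugate (γ / (γ - 1)) := Real.HolderConjugate.conjExponent hγ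
    set q : ℝ := γ / (γ - 1) with hq_def
    have hq1 : 1 < q := hq.symm.lt
    have hq0 : 0 < q := lt_trans one_pos hq1
    set g : Spc n → ℝ := B.indicator (fun _ => (1:ℝ)) with hg_def
    have hg_nonneg : 0 ≤ᵐ[volume] g := by
      refine Filter.Eventually.of_forall fun x => ?_
      rw [hg_def]
      exact Set.indicator_nonneg (fun _ _ => zero_le_one) x
    have hgmem : MemLp g (ENNReal.ofReal q) := by
      exact memLp_indicator_const _ hmB 1 (Or.inr (measure_closedBall_lt_top).ne)
    have hfabs_nonneg : 0 ≤ᵐ[volume] fun x : Spc n => |f x| :=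
      Filter.Eventually.of_forall fun x => abs_nonneg _
    have holder := integral_mul_le_Lp_mul_Lq_of_nonneg hq hfabs_nonneg hg_nonneg
      hfγ.abs_real hgmem
    have hlhs : (∫ x, |f x| * g x) = ∫ x in B, |f x| := by
      rw [← integral_indicator hmB]
      refine integral_congr_ae (Filter.Eventually.of_forall fun x => ?_)
      rw [hg_def]
      by_cases hx : x ∈ B
      · simp [Set.indicator_of_mem hx]
      · simp [Set.indicator_of_notMem hx]
    have hgq : (∫ x, g x ^ q) = (volume B).toReal := by
      have : (fun x => g x ^ q) = B.indicator (fun _ => (1:ℝ)) := by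
        funext x
        rw [hg_def]
        by_cases hx : x ∈ B
        · simp [Set.indicator_of_mem hx]
        · simp [Set.indicator_of_notMem hx, Real.zero_rpow hq0.ne']
      rw [this, integral_indicator_const _ hmB]
      simp
      rfl
    rw [hlhs, hgq] at holder
    have hinner : (∫ x in B, |f x|) ≤ N * (ω ^ ((γ - 1)/γ) * R ^ α) := by
      refine holder.trans ?_
      rw [hvol]
      have h1q : 1 / q = (γ - 1) / γ := by
        rw [hq_def]; field_simp
      rw [h1q, Real.mul_rpow (by positivity) hω.le, ← hN_def]
      have : (R ^ (n:ℕ)) ^ ((γ-1)/γ) = R ^ α := by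
        rw [← Real.rpow_natCast R n, ← Real.rpow_mul hR.le, hα_def]
        congr 1
        field_simp
      rw [this]
      ring_nf
      exact le_refl _
    -- outer estimate
    have houter : (∫ x in Bᶜ, |f x|) ≤ M / R ^ 2 := by
      have step1 : (∫ x in Bᶜ, |f x|) ≤ ∫ x in Bᶜ, ‖x‖ ^ 2 * |f x| / R ^ 2 := by
        refine setIntegral_mono_on habs.integrableOn
          ((hf2.div_const _).integrableOn) hmB.compl fun x hx => ?_
        have hxR : R < ‖x‖ := by
          have : ¬ (dist x 0 ≤ R) := hx
          rw [dist_zero_right] at this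
          linarith [not_le.mp this]
        rw [le_div_iff₀ (by positivity)]
        have h2 : R ^ 2 ≤ ‖x‖ ^ 2 := by nlinarith [norm_nonneg x]
        nlinarith [abs_nonneg (f x)]
      have step2 : (∫ x in Bᶜ, ‖x‖ ^ 2 * |f x| / R ^ 2)
          = (∫ x in Bᶜ, ‖x‖ ^ 2 * |f x|) / R ^ 2 := by
        rw [integral_div]
      have step3 : (∫ x in Bᶜ, ‖x‖ ^ 2 * |f x|) ≤ M := by
        rw [hM_def]
        exact setIntegral_le_integral hf2
          (Filter.Eventually.of_forall fun x => mul_nonneg (by positivity) (abs_nonneg _))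
      calc (∫ x in Bᶜ, |f x|) ≤ ∫ x in Bᶜ, ‖x‖ ^ 2 * |f x| / R ^ 2 := step1
        _ = (∫ x in Bᶜ, ‖x‖ ^ 2 * |f x|) / R ^ 2 := step2
        _ ≤ M / R ^ 2 := by
            apply div_le_div_of_nonneg_right step3 (by positivity) |>.trans_eq rfl
    rw [hsplit]
    have : N * (ω ^ ((γ - 1)/γ) * R ^ α) = (ω ^ ((γ - 1)/γ) * N) * R ^ α := by ring
    linarith [hinner, houter]
  -- apply the optimization lemma
  have hopt := chemin_opt_lemma (mul_nonneg (Real.rpow_nonneg hω.le _) hN) hM hα key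
  have hD : α + 2 = (((n:ℝ) + 2) * γ - (n:ℝ)) / γ := by
    rw [hα_def]; field_simp; ring
  have hD0 : (0:ℝ) < ((n:ℝ) + 2) * γ - (n:ℝ) := by
    have h1 : (1:ℝ) ≤ (n:ℝ) := by exact_mod_cast hn
    nlinarith
  have he1 : 2 / (α + 2) = 2 * γ / (((n:ℝ) + 2) * γ - (n:ℝ)) := by
    rw [hD, div_div_eq_mul_div]
    try ring
  have he2 : α / (α + 2) = (n:ℝ) * (γ - 1) / (((n:ℝ) + 2) * γ - (n:ℝ)) := by
    rw [hD, hα_def]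
    field_simp
  rw [he1, he2] at hopt
  refine hopt.trans_eq ?_
  rw [Real.mul_rpow (Real.rpow_nonneg hω.le _) hN,
    ← Real.rpow_mul hω.le]
  have : (γ - 1) / γ * (2 * γ / (((n:ℝ) + 2) * γ - (n:ℝ)))
      = 2 * (γ - 1) / (((n:ℝ) + 2) * γ - (n:ℝ)) := by
    field_simp
  rw [this]
  ring
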